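/- For the zero-temperature single-mode QFI I(ξ) (as a function of the squeezing fraction ξ ∈ (0,1) for fixed η ∈ (0,1), N_S > 0), the second derivative ∂²_ξ I is strictly negative; i.e., I is strictly concave in ξ. -/

import Mathlib

set_option maxHeartbeats 1600000
open Real

noncomputable def I0 (η NS ξ : ℝ) : ℝ :=
  4*NS*((1-ξ) / (1 - 2*η^2*(Real.sqrt (ξ*NS*(1+ξ*NS)) - ξ*NS))
    + ξ*((1-η^2)^2 + η^4) / ((1-η^2)*(1 + 2*ξ*NS*η^2*(1-η^2))))

noncomputable def f1 (c N ξ : ℝ) : ℝ :=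
  4*N*((-(1 - 2*c*(Real.sqrt (ξ*N*(1+ξ*N)) - ξ*N))
        - (1-ξ)*(-(c*N*(1+2*ξ*N-2*Real.sqrt (ξ*N*(1+ξ*N)))/Real.sqrt (ξ*N*(1+ξ*N)))))
      /(1 - 2*c*(Real.sqrt (ξ*N*(1+ξ*N)) - ξ*N))^2
    + ((1-c)^2+c^2)/((1-c)*(1+2*ξ*N*c*(1-c))^2))

noncomputable def f2 (c N ξ : ℝ) : ℝ :=
  4*N*((c*N*(-4*(1+2*ξ*N-2*Real.sqrt (ξ*N*(1+ξ*N)))*(Real.sqrt (ξ*N*(1+ξ*N)))^2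
            *(1 - 2*c*(Real.sqrt (ξ*N*(1+ξ*N)) - ξ*N))
          - (1-ξ)*N*(1 - 2*c*(Real.sqrt (ξ*N*(1+ξ*N)) - ξ*N))
          + 4*(1-ξ)*c*N*(1+2*ξ*N-2*Real.sqrt (ξ*N*(1+ξ*N)))^2*Real.sqrt (ξ*N*(1+ξ*N)))
        /(2*(Real.sqrt (ξ*N*(1+ξ*N)))^3))
      /(1 - 2*c*(Real.sqrt (ξ*N*(1+ξ*N)) - ξ*N))^3
    + -(4*((1-c)^2+c^2)*N*c/(1+2*ξ*N*c*(1-c))^3))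

lemma hasDerivAt_arg (N ξ : ℝ) :
    HasDerivAt (fun x : ℝ => x*N*(1+x*N)) (N*(1+2*ξ*N)) ξ := by
  have h := ((hasDerivAt_id ξ).mul_const N).mul
    (((hasDerivAt_id ξ).mul_const N).const_add 1)
  refine HasDerivAt.congr_deriv h ?_
  simp only [id_eq]
  ring

lemma hasDerivAt_sF (N ξ : ℝ) (h : ξ*N*(1+ξ*N) ≠ 0) :
    HasDerivAt (fun x : ℝ => Real.sqrt (x*N*(1+x*N)))
      (N*(1+2*ξ*N)/(2*Real.sqrt (ξ*N*(1+ξ*N)))) ξ :=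
  (hasDerivAt_arg N ξ).sqrt h

lemma hasDerivAt_DF (c N ξ : ℝ) (harg : 0 < ξ*N*(1+ξ*N)) :
    HasDerivAt (fun x : ℝ => 1 - 2*c*(Real.sqrt (x*N*(1+x*N)) - x*N))
      (-(c*N*(1+2*ξ*N-2*Real.sqrt (ξ*N*(1+ξ*N)))/Real.sqrt (ξ*N*(1+ξ*N)))) ξ := by
  set s := Real.sqrt (ξ*N*(1+ξ*N)) with hsdef
  have hs : 0 < s := Real.sqrt_pos.2 harg
  have h1 : HasDerivAt (fun x : ℝ => Real.sqrt (x*N*(1+x*N)) - x*N)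
      (N*(1+2*ξ*N)/(2*s) - N) ξ := by
    have := (hasDerivAt_sF N ξ harg.ne').sub ((hasDerivAt_id ξ).mul_const N)
    refine HasDerivAt.congr_deriv this ?_
    rw [← hsdef]
    ring
  have h2 := (h1.const_mul (2*c)).const_sub 1
  refine HasDerivAt.congr_deriv h2 ?_
  field_simp

lemma hasDerivAt_DpF (c N ξ : ℝ) (harg : 0 < ξ*N*(1+ξ*N)) :
    HasDerivAt (fun x : ℝ =>
        -(c*N*(1+2*x*N-2*Real.sqrt (x*N*(1+x*N)))/Real.sqrt (x*N*(1+x*N))))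
      (c*N^2/(2*(Real.sqrt (ξ*N*(1+ξ*N)))^3)) ξ := by
  set s := Real.sqrt (ξ*N*(1+ξ*N)) with hsdef
  have hs : 0 < s := Real.sqrt_pos.2 harg
  have hs2 : s^2 = ξ*N*(1+ξ*N) := Real.sq_sqrt harg.le
  have hnum : HasDerivAt (fun x : ℝ => c*N*(1+2*x*N-2*Real.sqrt (x*N*(1+x*N))))
      (c*N*(2*N - 2*(N*(1+2*ξ*N)/(2*s)))) ξ := by
    have hinner : HasDerivAt (fun x : ℝ => 1+2*x*N-2*Real.sqrt (x*N*(1+x*N)))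
        (2*N - 2*(N*(1+2*ξ*N)/(2*s))) ξ := by
      have h1 : HasDerivAt (fun x : ℝ => 1+2*x*N) (2*N) ξ := by
        have := (((hasDerivAt_id ξ).const_mul 2).mul_const N).const_add 1
        refine HasDerivAt.congr_deriv this ?_
        norm_num
      exact h1.sub ((hasDerivAt_sF N ξ harg.ne').const_mul 2)
    exact hinner.const_mul (c*N)
  have hq := (hnum.div (hasDerivAt_sF N ξ harg.ne') hs.ne').neg
  refine HasDerivAt.congr_deriv hq ?_
  rw [← hsdef]
  field_simp
  ring_nf
  linear_combination (-4*c*N^2) * hs2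

lemma basic_facts (η N ξ : ℝ) (hη0 : 0 < η) (hη1 : η < 1) (hN : 0 < N) (hξ : 0 < ξ) :
    0 < ξ*N*(1+ξ*N) ∧ 0 < Real.sqrt (ξ*N*(1+ξ*N)) ∧
    (Real.sqrt (ξ*N*(1+ξ*N)))^2 = ξ*N*(1+ξ*N) ∧
    0 < 1 - 2*η^2*(Real.sqrt (ξ*N*(1+ξ*N)) - ξ*N) ∧
    0 < 1 + 2*ξ*N*η^2*(1-η^2) := by
  have hc0 : 0 < η^2 := by positivity
  have hc1 : η^2 < 1 := by nlinarith
  have harg : 0 < ξ*N*(1+ξ*N) := by positivity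
  have hs : 0 < Real.sqrt (ξ*N*(1+ξ*N)) := Real.sqrt_pos.2 harg
  have hs2 : (Real.sqrt (ξ*N*(1+ξ*N)))^2 = ξ*N*(1+ξ*N) := Real.sq_sqrt harg.le
  have h1c : (0:ℝ) < 1 - η^2 := by linarith
  have hsu : Real.sqrt (ξ*N*(1+ξ*N)) < ξ*N + 1/2 := by
    rw [show ξ*N + 1/2 = Real.sqrt ((ξ*N + 1/2)^2) by rw [Real.sqrt_sq (by positivity)]]
    apply Real.sqrt_lt_sqrt harg.le
    nlinarith
  have hsu0 : ξ*N < Real.sqrt (ξ*N*(1+ξ*N)) := by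
    nlinarith [hs2, hs, mul_pos hξ hN]
  have hBpos : (0:ℝ) < 2*ξ*N*η^2*(1-η^2) := by positivity
  refine ⟨harg, hs, hs2, by nlinarith, by nlinarith⟩

lemma hasDerivAt_I0 (η N ξ : ℝ) (hη0 : 0 < η) (hη1 : η < 1) (hN : 0 < N) (hξ : 0 < ξ) :
    HasDerivAt (fun x => I0 η N x) (f1 (η^2) N ξ) ξ := by
  obtain ⟨harg, hs, hs2, hD, hB⟩ := basic_facts η N ξ hη0 hη1 hN hξ
  have hc1 : η^2 < 1 := by nlinarith
  have hc0 : 0 < η^2 := by positivity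
  have h1c : (0:ℝ) < 1 - η^2 := by linarith
  have hT1 : HasDerivAt (fun x : ℝ => (1-x) / (1 - 2*η^2*(Real.sqrt (x*N*(1+x*N)) - x*N)))
      (((-1)*(1 - 2*η^2*(Real.sqrt (ξ*N*(1+ξ*N)) - ξ*N))
        - (1-ξ)*(-(η^2*N*(1+2*ξ*N-2*Real.sqrt (ξ*N*(1+ξ*N)))/Real.sqrt (ξ*N*(1+ξ*N)))))
       /(1 - 2*η^2*(Real.sqrt (ξ*N*(1+ξ*N)) - ξ*N))^2) ξ := by
    have hnum : HasDerivAt (fun x : ℝ => 1-x) (-1) ξ := by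
      simpa using (hasDerivAt_id ξ).const_sub 1
    exact hnum.div (hasDerivAt_DF (η^2) N ξ harg) hD.ne'
  have hden : HasDerivAt (fun x : ℝ => (1-η^2)*(1 + 2*x*N*η^2*(1-η^2)))
      (2*N*η^2*(1-η^2)^2) ξ := by
    have heq : (fun x : ℝ => (1-η^2)*(1 + 2*x*N*η^2*(1-η^2)))
        = (fun x : ℝ => (1-η^2) + x*(2*N*η^2*(1-η^2)^2)) := by funext x; ring
    rw [heq]
    have := ((hasDerivAt_id ξ).mul_const (2*N*η^2*(1-η^2)^2)).const_add (1-η^2)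
    refine HasDerivAt.congr_deriv this ?_
    simp [id_eq]
  have hT2 : HasDerivAt (fun x : ℝ => x*((1-η^2)^2 + η^4) / ((1-η^2)*(1 + 2*x*N*η^2*(1-η^2))))
      ((1*((1-η^2)^2 + η^4)*((1-η^2)*(1 + 2*ξ*N*η^2*(1-η^2)))
        - ξ*((1-η^2)^2 + η^4)*(2*N*η^2*(1-η^2)^2))
       /((1-η^2)*(1 + 2*ξ*N*η^2*(1-η^2)))^2) ξ := by
    have hnum : HasDerivAt (fun x : ℝ => x*((1-η^2)^2 + η^4)) (1*((1-η^2)^2 + η^4)) ξ := by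
      simpa using (hasDerivAt_id ξ).mul_const ((1-η^2)^2 + η^4)
    exact hnum.div hden (by positivity)
  have h := (hT1.add hT2).const_mul (4*N)
  have hI : (fun x => I0 η N x) = (fun x => 4*N*((1-x) / (1 - 2*η^2*(Real.sqrt (x*N*(1+x*N)) - x*N))
      + x*((1-η^2)^2 + η^4) / ((1-η^2)*(1 + 2*x*N*η^2*(1-η^2))))) := by
    funext x; simp only [I0]
  rw [hI]
  refine HasDerivAt.congr_deriv h ?_
  unfold f1
  have e2 : (1*((1-η^2)^2 + η^4)*((1-η^2)*(1 + 2*ξ*N*η^2*(1-η^2)))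
        - ξ*((1-η^2)^2 + η^4)*(2*N*η^2*(1-η^2)^2))
       /((1-η^2)*(1 + 2*ξ*N*η^2*(1-η^2)))^2
      = ((1-η^2)^2+η^4)/((1-η^2)*(1+2*ξ*N*η^2*(1-η^2))^2) := by
    rw [div_eq_div_iff (pow_pos (mul_pos h1c hB) 2).ne' (mul_pos h1c (pow_pos hB 2)).ne']
    ring
  rw [e2]
  ring

lemma hasDerivAt_f1 (η N ξ : ℝ) (hη0 : 0 < η) (hη1 : η < 1) (hN : 0 < N) (hξ : 0 < ξ) :
    HasDerivAt (fun x => f1 (η^2) N x) (f2 (η^2) N ξ) ξ := by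
  obtain ⟨harg, hs, hs2, hD, hB⟩ := basic_facts η N ξ hη0 hη1 hN hξ
  have hc1 : η^2 < 1 := by nlinarith
  have hc0 : 0 < η^2 := by positivity
  have h1c : (0:ℝ) < 1 - η^2 := by linarith
  set s := Real.sqrt (ξ*N*(1+ξ*N)) with hsdef
  have hDd := hasDerivAt_DF (η^2) N ξ harg
  have hDp := hasDerivAt_DpF (η^2) N ξ harg
  have hu1 : HasDerivAt (fun x : ℝ => -(1 - 2*η^2*(Real.sqrt (x*N*(1+x*N)) - x*N))
      - (1-x)*(-(η^2*N*(1+2*x*N-2*Real.sqrt (x*N*(1+x*N)))/Real.sqrt (x*N*(1+x*N)))))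
      (-(-(η^2*N*(1+2*ξ*N-2*s)/s))
       - ((-1)*(-(η^2*N*(1+2*ξ*N-2*s)/s)) + (1-ξ)*(η^2*N^2/(2*s^3)))) ξ := by
    have hmul := (((hasDerivAt_id ξ).const_sub 1)).mul hDp
    have h2 := (hDd.neg).sub hmul
    exact h2.congr_deriv rfl
  have hv1 : HasDerivAt (fun x : ℝ => (1 - 2*η^2*(Real.sqrt (x*N*(1+x*N)) - x*N))^2)
      ((2:ℕ)*(1 - 2*η^2*(s - ξ*N))^1*(-(η^2*N*(1+2*ξ*N-2*s)/s))) ξ := hDd.pow 2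
  have hQ1 := hu1.div hv1 (pow_ne_zero 2 hD.ne')
  have hBd : HasDerivAt (fun x : ℝ => 1+2*x*N*η^2*(1-η^2)) (2*N*η^2*(1-η^2)) ξ := by
    have heq : (fun x : ℝ => 1+2*x*N*η^2*(1-η^2)) = (fun x : ℝ => 1 + x*(2*N*η^2*(1-η^2))) := by
      funext x; ring
    rw [heq]
    have := ((hasDerivAt_id ξ).mul_const (2*N*η^2*(1-η^2))).const_add 1
    refine HasDerivAt.congr_deriv this ?_
    simp [id_eq]
  have hden2 : HasDerivAt (fun x : ℝ => (1-η^2)*(1+2*x*N*η^2*(1-η^2))^2)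
      ((1-η^2)*((2:ℕ)*(1+2*ξ*N*η^2*(1-η^2))^1*(2*N*η^2*(1-η^2)))) ξ :=
    (hBd.pow 2).const_mul (1-η^2)
  have hQ2 := (hasDerivAt_const (𝕜 := ℝ) (F := ℝ) ξ ((1-η^2)^2+(η^2)^2)).div hden2
    (by positivity)
  have h := (hQ1.add hQ2).const_mul (4*N)
  have hfe : (fun x => f1 (η^2) N x) = (fun x : ℝ =>
      4*N*((-(1 - 2*η^2*(Real.sqrt (x*N*(1+x*N)) - x*N))
        - (1-x)*(-(η^2*N*(1+2*x*N-2*Real.sqrt (x*N*(1+x*N)))/Real.sqrt (x*N*(1+x*N)))))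
      /(1 - 2*η^2*(Real.sqrt (x*N*(1+x*N)) - x*N))^2
      + ((1-η^2)^2+(η^2)^2)/((1-η^2)*(1+2*x*N*η^2*(1-η^2))^2))) := by
    funext x; simp only [f1]
  rw [hfe]
  refine HasDerivAt.congr_deriv h ?_
  unfold f2
  rw [← hsdef]
  push_cast
  congr 1
  congr 1
  · rw [div_eq_div_iff (by positivity) (by positivity)]
    field_simp [hs.ne', hD.ne']
    ring
  · rw [← neg_div, div_eq_div_iff (by positivity) (by positivity)]
    ring

lemma f2_neg (η N ξ : ℝ) (hη0 : 0 < η) (hη1 : η < 1) (hN : 0 < N)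
    (hξ0 : 0 < ξ) (hξ1 : ξ < 1) : f2 (η^2) N ξ < 0 := by
  obtain ⟨harg, hs, hs2, hD, hB⟩ := basic_facts η N ξ hη0 hη1 hN hξ0
  have hc1 : η^2 < 1 := by nlinarith
  have hc0 : 0 < η^2 := by positivity
  have h1c : (0:ℝ) < 1 - η^2 := by linarith
  set s := Real.sqrt (ξ*N*(1+ξ*N)) with hsdef
  have hw : 0 < 1+2*ξ*N-2*s := by nlinarith [hs2, hs, mul_pos hξ0 hN]
  have hw1 : (1+2*ξ*N-2*s)*(1+2*ξ*N+2*s) = 1 := by linear_combination (-4)*hs2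
  have hm : 0 < (1-ξ)*N := by nlinarith
  have hP : 0 < 1+2*ξ*N+2*s := by nlinarith [mul_pos hξ0 hN]
  -- G2 < 0
  have h5 : (4*(1-ξ)*N*(1+2*ξ*N-2*s)*s - 4*(1+2*ξ*N-2*s)*s^2 - (1-ξ)*N)*(1+2*ξ*N+2*s)
      = -4*s^2 - ((1-ξ)*N)*(1+2*ξ*N-2*s) := by
    linear_combination (4*(1-ξ)*N*s - 4*s^2)*hw1
  have h6 : -4*s^2 - ((1-ξ)*N)*(1+2*ξ*N-2*s) < 0 := by
    nlinarith [mul_pos hm hw, pow_pos hs 2]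
  have hG2 : 4*(1-ξ)*N*(1+2*ξ*N-2*s)*s - 4*(1+2*ξ*N-2*s)*s^2 - (1-ξ)*N < 0 := by
    nlinarith [h5, h6, hP]
  -- M < 0
  have hM0 : -4*(1+2*ξ*N-2*s)*s^2 - (1-ξ)*N < 0 := by
    nlinarith [mul_pos hw (pow_pos hs 2)]
  have hMlin : -4*(1+2*ξ*N-2*s)*s^2*(1 - 2*η^2*(s - ξ*N))
        - (1-ξ)*N*(1 - 2*η^2*(s - ξ*N))
        + 4*(1-ξ)*η^2*N*(1+2*ξ*N-2*s)^2*s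
      = (1-η^2)*(-4*(1+2*ξ*N-2*s)*s^2 - (1-ξ)*N)
        + η^2*((1+2*ξ*N-2*s)*(4*(1-ξ)*N*(1+2*ξ*N-2*s)*s - 4*(1+2*ξ*N-2*s)*s^2 - (1-ξ)*N)) := by
    ring
  have hM : -4*(1+2*ξ*N-2*s)*s^2*(1 - 2*η^2*(s - ξ*N))
        - (1-ξ)*N*(1 - 2*η^2*(s - ξ*N))
        + 4*(1-ξ)*η^2*N*(1+2*ξ*N-2*s)^2*s < 0 := by
    rw [hMlin]
    have t1 := mul_neg_of_pos_of_neg h1c hM0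
    have t2 := mul_neg_of_pos_of_neg hc0 (mul_neg_of_pos_of_neg hw hG2)
    linarith
  -- assemble
  unfold f2
  rw [← hsdef]
  have hnum : η^2*N*(-4*(1+2*ξ*N-2*s)*s^2*(1 - 2*η^2*(s - ξ*N))
      - (1-ξ)*N*(1 - 2*η^2*(s - ξ*N))
      + 4*(1-ξ)*η^2*N*(1+2*ξ*N-2*s)^2*s) < 0 := by
    have := mul_pos hc0 hN
    nlinarith [hM, mul_pos hc0 hN]
  have hq1 : η^2*N*(-4*(1+2*ξ*N-2*s)*s^2*(1 - 2*η^2*(s - ξ*N))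
      - (1-ξ)*N*(1 - 2*η^2*(s - ξ*N))
      + 4*(1-ξ)*η^2*N*(1+2*ξ*N-2*s)^2*s)/(2*s^3)/(1 - 2*η^2*(s - ξ*N))^3 < 0 := by
    apply div_neg_of_neg_of_pos _ (pow_pos hD 3)
    exact div_neg_of_neg_of_pos hnum (by positivity)
  have hK0 : 0 < (1-η^2)^2+(η^2)^2 := by nlinarith [pow_pos hc0 2, sq_nonneg (1-η^2)]
  have hq2 : 0 < 4*((1-η^2)^2+(η^2)^2)*N*η^2/(1+2*ξ*N*η^2*(1-η^2))^3 := by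
    apply div_pos _ (pow_pos hB 3)
    positivity
  have : η^2*N*(-4*(1+2*ξ*N-2*s)*s^2*(1 - 2*η^2*(s - ξ*N))
      - (1-ξ)*N*(1 - 2*η^2*(s - ξ*N))
      + 4*(1-ξ)*η^2*N*(1+2*ξ*N-2*s)^2*s)/(2*s^3)/(1 - 2*η^2*(s - ξ*N))^3
      + -(4*((1-η^2)^2+(η^2)^2)*N*η^2/(1+2*ξ*N*η^2*(1-η^2))^3) < 0 := by linarith
  nlinarith [this, hN]

lemma deriv2_eq (η NS : ℝ) (hη0 : 0 < η) (hη1 : η < 1) (hNS : 0 < NS) :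
    ∀ ξ ∈ Set.Ioo (0:ℝ) 1, deriv (deriv (fun ξ => I0 η NS ξ)) ξ = f2 (η^2) NS ξ := by
  intro ξ hξ
  have hev : deriv (fun x => I0 η NS x) =ᶠ[nhds ξ] (fun x => f1 (η^2) NS x) := by
    filter_upwards [Ioi_mem_nhds hξ.1] with x hx
    exact (hasDerivAt_I0 η NS x hη0 hη1 hNS hx).deriv
  calc deriv (deriv (fun x => I0 η NS x)) ξ
      = deriv (fun x => f1 (η^2) NS x) ξ := hev.deriv_eq
    _ = f2 (η^2) NS ξ := (hasDerivAt_f1 η NS ξ hη0 hη1 hNS hξ.1).deriv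

theorem qfi_strictly_concave (η NS : ℝ) (hη0 : 0 < η) (hη1 : η < 1) (hNS : 0 < NS) :
    (∀ ξ ∈ Set.Ioo (0:ℝ) 1, deriv (deriv (fun ξ => I0 η NS ξ)) ξ < 0) ∧
    StrictConcaveOn ℝ (Set.Ioo (0:ℝ) 1) (fun ξ => I0 η NS ξ) := by
  have hkey : ∀ ξ ∈ Set.Ioo (0:ℝ) 1, deriv (deriv (fun ξ => I0 η NS ξ)) ξ < 0 := by
    intro ξ hξ
    rw [deriv2_eq η NS hη0 hη1 hNS ξ hξ]
    exact f2_neg η NS ξ hη0 hη1 hNS hξ.1 hξ.2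
  refine ⟨hkey, ?_⟩
  apply strictConcaveOn_of_deriv2_neg (convex_Ioo 0 1)
  · intro x hx
    exact (hasDerivAt_I0 η NS x hη0 hη1 hNS hx.1).continuousAt.continuousWithinAt
  · intro x hx
    rw [interior_Ioo] at hx
    exact hkey x hx
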